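/- Assume b₁₂ = b₂₂ = 0, b₁₀, b₁₁, b₂₀, b₂₁ > 0, r₁₀ − 1 = r₁₁ − 2 = r₂₀ − 1 = r₂₁ − 2 =: r, θ₁ = θ₂ =: θ, κ₁ = κ₂ =: κ, θ − 1 < r < 0, r = κ + θ − 1, and a₁a₂ ≥ b₁b₂, where b₁ = b₁₀ + b₁₁ and b₂ = b₂₀ + b₂₁. Then there exists a constant δ₀ > 0 such that, with g̃(x,y) := −δ₀ ln x − ln y (so that ℒg̃ involves only derivatives of g̃, since b₁₂ = b₂₂ = 0), one has ℒg̃(x,y) ≤ 0 for all x, y > 0. -/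

import Mathlib

open Real MeasureTheory
open scoped Classical

/-- The spectrally positive `α`-stable jump measure on `(0,∞)` with density
`z ↦ (α(α−1)/(Γ(α)Γ(2−α))) z^{−1−α}`. -/
noncomputable def muStable (α : ℝ) : Measure ℝ :=
  volume.withDensity fun z =>
    ENNReal.ofReal
      (if 0 < z then α * (α - 1) / (Real.Gamma α * Real.Gamma (2 - α)) * z ^ (-1 - α) else 0)

/-- Partial derivative in the first variable. -/
noncomputable def pX (g : ℝ → ℝ → ℝ) (x y : ℝ) : ℝ := deriv (fun t => g t y) x

/-- Partial derivative in the second variable. -/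
noncomputable def pY (g : ℝ → ℝ → ℝ) (x y : ℝ) : ℝ := deriv (fun t => g x t) y

/-- Second partial derivative in the first variable. -/
noncomputable def pXX (g : ℝ → ℝ → ℝ) (x y : ℝ) : ℝ := deriv (fun t => pX g t y) x

/-- Second partial derivative in the second variable. -/
noncomputable def pYY (g : ℝ → ℝ → ℝ) (x y : ℝ) : ℝ := deriv (fun t => pY g x t) y

/-- The generator `ℒ` of the two–dimensional system (1.1). -/
noncomputable def Lop (α₁ α₂ a₁ a₂ κ₁ κ₂ θ₁ θ₂ r₁₀ r₁₁ r₁₂ r₂₀ r₂₁ r₂₂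
    b₁₀ b₁₁ b₁₂ b₂₀ b₂₁ b₂₂ : ℝ) (g : ℝ → ℝ → ℝ) (x y : ℝ) : ℝ :=
  a₁ * x ^ θ₁ * y ^ κ₁ * pX g x y + a₂ * y ^ θ₂ * x ^ κ₂ * pY g x y
    - b₁₀ * x ^ r₁₀ * pX g x y + b₁₁ * x ^ r₁₁ * pXX g x y
    + b₁₂ * x ^ r₁₂ *
        ∫ z in Set.Ioi (0 : ℝ), (g (x + z) y - g x y - z * pX g x y) ∂ muStable α₁
    - b₂₀ * y ^ r₂₀ * pY g x y + b₂₁ * y ^ r₂₁ * pYY g x y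
    + b₂₂ * y ^ r₂₂ *
        ∫ z in Set.Ioi (0 : ℝ), (g x (y + z) - g x y - z * pY g x y) ∂ muStable α₂

/-- `rᵢ := min{ r_{ij} − ϱ_{ij} : j ∈ {0,1,2}, b_{ij} ≠ 0 }` where
`ϱ_{i0} = 1`, `ϱ_{i1} = 2`, `ϱ_{i2} = α`. -/
noncomputable def rExp (α r₀ r₁ r₂ b₀ b₁ b₂ : ℝ) : ℝ :=
  sInf {v : ℝ | (b₀ ≠ 0 ∧ v = r₀ - 1) ∨ (b₁ ≠ 0 ∧ v = r₁ - 2) ∨ (b₂ ≠ 0 ∧ v = r₂ - α)}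

/-- `bᵢ := Σ_{j : b_{ij} ≠ 0, r_{ij} − ϱ_{ij} = rᵢ} b_{ij}`. -/
noncomputable def bCoef (α r₀ r₁ r₂ b₀ b₁ b₂ : ℝ) : ℝ :=
  (if b₀ ≠ 0 ∧ r₀ - 1 = rExp α r₀ r₁ r₂ b₀ b₁ b₂ then b₀ else 0) +
    (if b₁ ≠ 0 ∧ r₁ - 2 = rExp α r₀ r₁ r₂ b₀ b₁ b₂ then b₁ else 0) +
    (if b₂ ≠ 0 ∧ r₂ - α = rExp α r₀ r₁ r₂ b₀ b₁ b₂ then b₂ else 0)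

/-- `min{ r_{ij} − ϱ_{ij} : j ∈ {1,2}, b_{ij} ≠ 0 }`. -/
noncomputable def rExp12 (α r₁ r₂ b₁ b₂ : ℝ) : ℝ :=
  sInf {v : ℝ | (b₁ ≠ 0 ∧ v = r₁ - 2) ∨ (b₂ ≠ 0 ∧ v = r₂ - α)}


lemma key_ineq (a₁ a₂ b₁ b₂ t : ℝ) (ha₁ : 0 < a₁) (ha₂ : 0 < a₂)
    (hb₁ : 0 < b₁) (hb₂ : 0 < b₂) (ht : 0 < t) (ht1 : t < 1)
    (hab : b₁ * b₂ ≤ a₁ * a₂) :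
    ∃ δ₀ : ℝ, 0 < δ₀ ∧ ∀ u v : ℝ, 0 < u → 0 < v →
      δ₀ * b₁ * (u ^ t * v ^ (1 - t)) + b₂ * (u ^ (1 - t) * v ^ t)
        ≤ δ₀ * a₁ * u + a₂ * v := by
  have h1t : 0 < 1 - t := by linarith
  have hba : 0 < b₂ / a₂ := div_pos hb₂ ha₂
  set D : ℝ := (b₂ / a₂) ^ (1 - t)⁻¹ with hDdef
  have hD : 0 < D := Real.rpow_pos_of_pos hba _
  have hDpow : D ^ (1 - t) = b₂ / a₂ := by
    rw [hDdef, ← Real.rpow_mul hba.le, inv_mul_cancel₀ h1t.ne', Real.rpow_one]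
  clear_value D
  refine ⟨a₂ / a₁ * D, by positivity, ?_⟩
  set δ₀ : ℝ := a₂ / a₁ * D with hδdef
  have hδ : 0 < δ₀ := by positivity
  clear_value δ₀
  have hδa : δ₀ * a₁ = a₂ * D := by
    rw [hδdef]; field_simp
  have hDsplit : D ^ t * D ^ (1 - t) = D := by
    rw [← Real.rpow_add hD]; norm_num
  have hasplit : a₂ ^ t * a₂ ^ (1 - t) = a₂ := by
    rw [← Real.rpow_add ha₂]; norm_num
  have hC2 : (δ₀ * a₁) ^ (1 - t) * a₂ ^ t = b₂ := by
    rw [hδa, Real.mul_rpow ha₂.le hD.le, hDpow]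
    have : a₂ ^ (1 - t) * a₂ ^ t = a₂ := by rw [← Real.rpow_add ha₂]; norm_num
    calc a₂ ^ (1 - t) * (b₂ / a₂) * a₂ ^ t = (a₂ ^ (1 - t) * a₂ ^ t) * (b₂ / a₂) := by ring
      _ = a₂ * (b₂ / a₂) := by rw [this]
      _ = b₂ := by field_simp
  have hC1 : δ₀ * b₁ ≤ (δ₀ * a₁) ^ t * a₂ ^ (1 - t) := by
    rw [hδa, Real.mul_rpow ha₂.le hD.le]
    have hrhs : a₂ ^ t * D ^ t * a₂ ^ (1 - t) = a₂ * D ^ t := by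
      calc a₂ ^ t * D ^ t * a₂ ^ (1 - t) = (a₂ ^ t * a₂ ^ (1 - t)) * D ^ t := by ring
        _ = a₂ * D ^ t := by rw [hasplit]
    rw [hrhs]
    have hsplit' : D = D ^ t * (b₂ / a₂) := by rw [← hDpow, hDsplit]
    have hlhs : δ₀ * b₁ = b₁ * b₂ / (a₁ * a₂) * a₂ * D ^ t := by
      rw [hδdef]
      conv_lhs => rw [hsplit']
      field_simp
    rw [hlhs]
    have hDt : 0 < D ^ t := Real.rpow_pos_of_pos hD _
    have h1 : b₁ * b₂ / (a₁ * a₂) ≤ 1 := by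
      rw [div_le_one (by positivity)]; exact hab
    calc b₁ * b₂ / (a₁ * a₂) * a₂ * D ^ t = (b₁ * b₂ / (a₁ * a₂)) * (a₂ * D ^ t) := by ring
      _ ≤ 1 * (a₂ * D ^ t) := mul_le_mul_of_nonneg_right h1 (by positivity)
      _ = a₂ * D ^ t := one_mul _
  intro u v hu hv
  have hAM1 : (δ₀ * a₁ * u) ^ t * (a₂ * v) ^ (1 - t)
      ≤ t * (δ₀ * a₁ * u) + (1 - t) * (a₂ * v) :=
    Real.geom_mean_le_arith_mean2_weighted ht.le h1t.le (by positivity) (by positivity)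
      (by ring)
  have hAM2 : (δ₀ * a₁ * u) ^ (1 - t) * (a₂ * v) ^ t
      ≤ (1 - t) * (δ₀ * a₁ * u) + t * (a₂ * v) :=
    Real.geom_mean_le_arith_mean2_weighted h1t.le ht.le (by positivity) (by positivity)
      (by ring)
  have hmul1 : (δ₀ * a₁ * u) ^ t * (a₂ * v) ^ (1 - t)
      = ((δ₀ * a₁) ^ t * a₂ ^ (1 - t)) * (u ^ t * v ^ (1 - t)) := by
    rw [Real.mul_rpow (by positivity) hu.le, Real.mul_rpow ha₂.le hv.le]; ring
  have hmul2 : (δ₀ * a₁ * u) ^ (1 - t) * (a₂ * v) ^ t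
      = ((δ₀ * a₁) ^ (1 - t) * a₂ ^ t) * (u ^ (1 - t) * v ^ t) := by
    rw [Real.mul_rpow (by positivity) hu.le, Real.mul_rpow ha₂.le hv.le]; ring
  have h1 : δ₀ * b₁ * (u ^ t * v ^ (1 - t)) ≤ t * (δ₀ * a₁ * u) + (1 - t) * (a₂ * v) := by
    refine le_trans ?_ hAM1
    rw [hmul1]
    have : 0 < u ^ t * v ^ (1 - t) := by positivity
    nlinarith
  have h2 : b₂ * (u ^ (1 - t) * v ^ t) ≤ (1 - t) * (δ₀ * a₁ * u) + t * (a₂ * v) := by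
    refine le_trans ?_ hAM2
    rw [hmul2, hC2]
  linarith

theorem lemma_t3_4_ii (α₁ α₂ a₁ a₂ κ₁ κ₂ θ₁ θ₂ r₁₀ r₁₁ r₁₂ r₂₀ r₂₁ r₂₂
    b₁₀ b₁₁ b₁₂ b₂₀ b₂₁ b₂₂ : ℝ)
    (hα₁ : 1 < α₁) (hα₁' : α₁ < 2) (hα₂ : 1 < α₂) (hα₂' : α₂ < 2)
    (ha₁ : 0 < a₁) (ha₂ : 0 < a₂) (hκ₁ : 0 < κ₁) (hκ₂ : 0 < κ₂)
    (hθ₁ : 0 ≤ θ₁) (hθ₂ : 0 ≤ θ₂)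
    (hr₁₀ : 0 ≤ r₁₀) (hr₁₁ : 0 ≤ r₁₁) (hr₂₀ : 0 ≤ r₂₀) (hr₂₁ : 0 ≤ r₂₁)
    (hb₁₂ : b₁₂ = 0) (hb₂₂ : b₂₂ = 0)
    (hb₁₀ : 0 < b₁₀) (hb₁₁ : 0 < b₁₁) (hb₂₀ : 0 < b₂₀) (hb₂₁ : 0 < b₂₁)
    (r θ κ : ℝ)
    (hre₁ : r₁₀ - 1 = r) (hre₂ : r₁₁ - 2 = r) (hre₃ : r₂₀ - 1 = r) (hre₄ : r₂₁ - 2 = r)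
    (hθe₁ : θ₁ = θ) (hθe₂ : θ₂ = θ) (hκe₁ : κ₁ = κ) (hκe₂ : κ₂ = κ)
    (hrl : θ - 1 < r) (hru : r < 0) (hrk : r = κ + θ - 1)
    (hab : a₁ * a₂ ≥ (b₁₀ + b₁₁) * (b₂₀ + b₂₁)) :
    ∃ δ₀ : ℝ, 0 < δ₀ ∧ ∀ x y : ℝ, 0 < x → 0 < y →
      Lop α₁ α₂ a₁ a₂ κ₁ κ₂ θ₁ θ₂ r₁₀ r₁₁ r₁₂ r₂₀ r₂₁ r₂₂ b₁₀ b₁₁ b₁₂ b₂₀ b₂₁ b₂₂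
          (fun x y => -δ₀ * Real.log x - Real.log y) x y ≤ 0 := by
  
  -- reduce parameter names
  have hκ : 0 < κ := hκe₁ ▸ hκ₁
  have hθlt : θ < 1 := by linarith
  have hc : (0:ℝ) < κ + 1 - θ := by linarith
  set t : ℝ := (1 - θ) / (κ + 1 - θ) with htdef
  have ht : 0 < t := div_pos (by linarith) hc
  have ht1 : t < 1 := (div_lt_one hc).mpr (by linarith)
  have he1 : (θ - 1) * t + κ * (1 - t) = r := by
    rw [htdef, hrk]; field_simp; ring
  have he2 : κ * t + (θ - 1) * (1 - t) = 0 := by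
    rw [htdef]; field_simp; ring
  obtain ⟨δ₀, hδ₀, hkey⟩ := key_ineq a₁ a₂ (b₁₀ + b₁₁) (b₂₀ + b₂₁) t ha₁ ha₂
    (by linarith) (by linarith) ht ht1 (by linarith)
  refine ⟨δ₀, hδ₀, fun x y hx hy => ?_⟩
  rw [hθe₁, hθe₂, hκe₁, hκe₂]
  -- derivative computations
  have hpXv : ∀ s w : ℝ, s ≠ 0 →
      pX (fun a b => -δ₀ * Real.log a - Real.log b) s w = -δ₀ * s⁻¹ := by
    intro s w hs
    exact (((Real.hasDerivAt_log hs).const_mul (-δ₀)).sub_const (Real.log w)).deriv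
  have hpYv : ∀ s w : ℝ, w ≠ 0 →
      pY (fun a b => -δ₀ * Real.log a - Real.log b) s w = -w⁻¹ := by
    intro s w hw
    exact (HasDerivAt.const_sub (-δ₀ * Real.log s) (Real.hasDerivAt_log hw)).deriv
  have hpXXv : pXX (fun a b => -δ₀ * Real.log a - Real.log b) x y = δ₀ * (x ^ 2)⁻¹ := by
    unfold pXX
    have hev : (fun s => pX (fun a b => -δ₀ * Real.log a - Real.log b) s y)
        =ᶠ[nhds x] fun s => -δ₀ * s⁻¹ := by
      filter_upwards [eventually_ne_nhds hx.ne'] with s hs using hpXv s y hs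
    rw [hev.deriv_eq, ((hasDerivAt_inv hx.ne').const_mul (-δ₀)).deriv]
    ring
  have hpYYv : pYY (fun a b => -δ₀ * Real.log a - Real.log b) x y = (y ^ 2)⁻¹ := by
    unfold pYY
    have hev : (fun s => pY (fun a b => -δ₀ * Real.log a - Real.log b) x s)
        =ᶠ[nhds y] fun s => -s⁻¹ := by
      filter_upwards [eventually_ne_nhds hy.ne'] with s hs using hpYv x s hs
    rw [hev.deriv_eq, HasDerivAt.deriv (f := fun s => -s⁻¹) (hasDerivAt_inv hy.ne').neg]
    ring
  -- power identities
  have hA : x ^ θ = x ^ (θ - 1) * x := by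
    conv_lhs => rw [show θ = (θ - 1) + 1 by ring, Real.rpow_add_one hx.ne']
  have hA' : y ^ θ = y ^ (θ - 1) * y := by
    conv_lhs => rw [show θ = (θ - 1) + 1 by ring, Real.rpow_add_one hy.ne']
  have hB : x ^ r₁₀ = x ^ r * x := by
    rw [show r₁₀ = r + 1 by linarith, Real.rpow_add_one hx.ne']
  have hB' : y ^ r₂₀ = y ^ r * y := by
    rw [show r₂₀ = r + 1 by linarith, Real.rpow_add_one hy.ne']
  have hC : x ^ r₁₁ = x ^ r * x ^ 2 := by
    rw [show r₁₁ = r + 2 by linarith, Real.rpow_add hx, Real.rpow_two]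
  have hC' : y ^ r₂₁ = y ^ r * y ^ 2 := by
    rw [show r₂₁ = r + 2 by linarith, Real.rpow_add hy, Real.rpow_two]
  -- the two AM-GM decompositions
  have hxθ := Real.rpow_pos_of_pos hx (θ - 1)
  have hyκ := Real.rpow_pos_of_pos hy κ
  have hxκ := Real.rpow_pos_of_pos hx κ
  have hyθ := Real.rpow_pos_of_pos hy (θ - 1)
  have hI4x : (x ^ (θ - 1) * y ^ κ) ^ t * (x ^ κ * y ^ (θ - 1)) ^ (1 - t) = x ^ r := by
    rw [Real.mul_rpow hxθ.le hyκ.le, Real.mul_rpow hxκ.le hyθ.le,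
      ← Real.rpow_mul hx.le, ← Real.rpow_mul hy.le, ← Real.rpow_mul hx.le,
      ← Real.rpow_mul hy.le]
    calc x ^ ((θ - 1) * t) * y ^ (κ * t) * (x ^ (κ * (1 - t)) * y ^ ((θ - 1) * (1 - t)))
        = (x ^ ((θ - 1) * t) * x ^ (κ * (1 - t))) *
            (y ^ (κ * t) * y ^ ((θ - 1) * (1 - t))) := by ring
      _ = x ^ ((θ - 1) * t + κ * (1 - t)) * y ^ (κ * t + (θ - 1) * (1 - t)) := by
          rw [← Real.rpow_add hx, ← Real.rpow_add hy]
      _ = x ^ r := by rw [he1, he2, Real.rpow_zero, mul_one]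
  have hI4y : (x ^ (θ - 1) * y ^ κ) ^ (1 - t) * (x ^ κ * y ^ (θ - 1)) ^ t = y ^ r := by
    rw [Real.mul_rpow hxθ.le hyκ.le, Real.mul_rpow hxκ.le hyθ.le,
      ← Real.rpow_mul hx.le, ← Real.rpow_mul hy.le, ← Real.rpow_mul hx.le,
      ← Real.rpow_mul hy.le]
    calc x ^ ((θ - 1) * (1 - t)) * y ^ (κ * (1 - t)) * (x ^ (κ * t) * y ^ ((θ - 1) * t))
        = (x ^ (κ * t + (θ - 1) * (1 - t))) * (y ^ ((θ - 1) * t + κ * (1 - t))) := by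
          rw [Real.rpow_add hx, Real.rpow_add hy]; ring
      _ = y ^ r := by rw [he1, he2, Real.rpow_zero, one_mul]
  have hkxy := hkey (x ^ (θ - 1) * y ^ κ) (x ^ κ * y ^ (θ - 1))
    (mul_pos hxθ hyκ) (mul_pos hxκ hyθ)
  rw [hI4x, hI4y] at hkxy
  -- assemble
  have hL0 : Lop α₁ α₂ a₁ a₂ κ κ θ θ r₁₀ r₁₁ r₁₂ r₂₀ r₂₁ r₂₂ b₁₀ b₁₁ b₁₂ b₂₀ b₂₁ b₂₂
      (fun x y => -δ₀ * Real.log x - Real.log y) x y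
      = a₁ * x ^ θ * y ^ κ * (-δ₀ * x⁻¹) + a₂ * y ^ θ * x ^ κ * (-y⁻¹)
        - b₁₀ * x ^ r₁₀ * (-δ₀ * x⁻¹) + b₁₁ * x ^ r₁₁ * (δ₀ * (x ^ 2)⁻¹)
        - b₂₀ * y ^ r₂₀ * (-y⁻¹) + b₂₁ * y ^ r₂₁ * (y ^ 2)⁻¹ := by
    simp only [Lop, hb₁₂, hb₂₂, zero_mul, mul_zero, add_zero,
      hpXv x y hx.ne', hpYv x y hy.ne', hpXXv, hpYYv]
  rw [hL0, hA, hA', hB, hB', hC, hC']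
  have hx2 : (x : ℝ) ^ 2 ≠ 0 := by positivity
  have hy2 : (y : ℝ) ^ 2 ≠ 0 := by positivity
  have hfin : a₁ * (x ^ (θ - 1) * x) * y ^ κ * (-δ₀ * x⁻¹)
        + a₂ * (y ^ (θ - 1) * y) * x ^ κ * (-y⁻¹)
        - b₁₀ * (x ^ r * x) * (-δ₀ * x⁻¹) + b₁₁ * (x ^ r * x ^ 2) * (δ₀ * (x ^ 2)⁻¹)
        - b₂₀ * (y ^ r * y) * (-y⁻¹) + b₂₁ * (y ^ r * y ^ 2) * (y ^ 2)⁻¹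
      = -(δ₀ * a₁ * (x ^ (θ - 1) * y ^ κ)) - a₂ * (x ^ κ * y ^ (θ - 1))
        + (δ₀ * (b₁₀ + b₁₁) * x ^ r + (b₂₀ + b₂₁) * y ^ r) := by
    field_simp
    ring
  rw [hfin]
  linarith
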